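/- For every non-negative even integer t and every τ in the complex upper half-plane ℍ, one has ℱ_t(q)/Θ₄(τ) = (1/2)·D_ω^t[ μ(4τ + 2ω, 4τ; 8τ) ]|_{ω=0}, where the function ω ↦ μ(4τ+2ω, 4τ; 8τ) is holomorphic in ω in a neighborhood of ω = 0 and D_ω^t denotes the t-fold application of the operator (1/2πi)·d/dω, evaluated at ω = 0. -/

import Mathlib

noncomputable section
open Complex Real

/-- `q = e^{2πiτ}`. -/
def nome (τ : ℂ) : ℂ := Complex.exp (2 * (π : ℂ) * I * τ)

/-- `Θ₄(τ) = 1 + 2 Σ_{n≥1} (−1)ⁿ q^{4n²}`. -/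
def Theta4 (τ : ℂ) : ℂ := 1 + 2 * ∑' n : ℕ, (-1 : ℂ) ^ (n + 1) * nome τ ^ (4 * (n + 1) ^ 2)

/-- `ℱ_t(x) = Σ_{β≥0} Σ_{α≥β+1} (−1)^{α+β} (2β+1)^t x^{4α²−(2β+1)²}`, with `α = β+1+j`. -/
def Fser (t : ℕ) (x : ℂ) : ℂ :=
  ∑' (β : ℕ) (j : ℕ), (-1 : ℂ) ^ (β + 1 + j + β) * (2 * (β : ℂ) + 1) ^ t *
    x ^ (4 * (β + 1 + j) ^ 2 - (2 * β + 1) ^ 2)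

/-- Jacobi theta `θ(v;τ) = Σ_{ν∈ℤ+1/2} (−1)^{ν−1/2} e^{2πivν} q^{ν²/2}`. -/
def jtheta (v τ : ℂ) : ℂ :=
  ∑' n : ℤ, (-1 : ℂ) ^ n * Complex.exp (2 * (π : ℂ) * I * v * ((n : ℂ) + 1 / 2)) *
    Complex.exp ((π : ℂ) * I * τ * ((n : ℂ) + 1 / 2) ^ 2)

/-- Zwegers's μ-function. -/
def mu (u v τ : ℂ) : ℂ :=
  (Complex.exp ((π : ℂ) * I * u) / jtheta v τ) *
    ∑' n : ℤ, (-Complex.exp (2 * (π : ℂ) * I * v)) ^ n * nome τ ^ ((n * (n + 1)) / 2 : ℤ) /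
      (1 - Complex.exp (2 * (π : ℂ) * I * u) * nome τ ^ (n : ℤ))

lemma nome_ne_zero (τ : ℂ) : nome τ ≠ 0 := Complex.exp_ne_zero _

lemma nome_pow_nat (τ : ℂ) (m : ℕ) : nome τ ^ m = Complex.exp (2 * (π : ℂ) * I * τ * m) := by
  rw [nome, ← Complex.exp_nat_mul]; ring_nf

lemma nome_zpow (τ : ℂ) (m : ℤ) : nome τ ^ m = Complex.exp (2 * (π : ℂ) * I * τ * m) := by
  rw [nome, ← Complex.exp_int_mul]; ring_nf

lemma norm_nome (τ : ℂ) : ‖nome τ‖ = Real.exp (-(2 * π * τ.im)) := by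
  rw [nome, Complex.norm_exp]
  congr 1
  simp [Complex.mul_re, Complex.mul_im]

lemma norm_nome_lt_one {τ : ℂ} (hτ : 0 < τ.im) : ‖nome τ‖ < 1 := by
  rw [norm_nome, Real.exp_lt_one_iff]
  have := Real.pi_pos
  nlinarith

section expsum
variable {ι : Type*}

lemma norm_cexp_le (w : ℂ) : ‖Complex.exp w‖ ≤ Real.exp ‖w‖ := by
  rw [Complex.norm_exp]
  exact Real.exp_le_exp.2 (Complex.re_le_norm w)

lemma expsum_summable_aux (a : ι → ℂ) (c : ι → ℂ) {r : ℝ} (hr : 0 < r)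
    (h : Summable fun i => ‖c i‖ * Real.exp (‖a i‖ * r)) :
    Summable fun i => (‖c i‖ * ‖a i‖) * Real.exp (‖a i‖ * (r / 2)) := by
  refine Summable.of_nonneg_of_le (fun i => by positivity) (fun i => ?_) (h.mul_left (2 / r))
  have h1 : ‖a i‖ ≤ 2 / r * Real.exp (‖a i‖ * (r / 2)) := by
    have h2 : ‖a i‖ * (r / 2) ≤ Real.exp (‖a i‖ * (r / 2)) := by
      nlinarith [Real.add_one_le_exp (‖a i‖ * (r / 2)), norm_nonneg (a i)]
    calc ‖a i‖ = 2 / r * (‖a i‖ * (r / 2)) := by field_simp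
    _ ≤ 2 / r * Real.exp (‖a i‖ * (r / 2)) := by
        apply mul_le_mul_of_nonneg_left h2; positivity
  calc ‖c i‖ * ‖a i‖ * Real.exp (‖a i‖ * (r / 2))
      ≤ ‖c i‖ * (2 / r * Real.exp (‖a i‖ * (r / 2))) * Real.exp (‖a i‖ * (r / 2)) := by
        have := norm_nonneg (c i)
        have h3 : (0:ℝ) ≤ Real.exp (‖a i‖ * (r / 2)) := (Real.exp_pos _).le
        nlinarith [mul_le_mul_of_nonneg_left h1 (norm_nonneg (c i))]
    _ = 2 / r * (‖c i‖ * Real.exp (‖a i‖ * r)) := by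
        have : Real.exp (‖a i‖ * (r/2)) * Real.exp (‖a i‖ * (r/2)) = Real.exp (‖a i‖ * r) := by
          rw [← Real.exp_add]; ring_nf
        rw [mul_assoc, mul_assoc, this]; ring
  
lemma expsum_hasDerivAt (a : ι → ℂ) (c : ι → ℂ) {r : ℝ} (hr : 0 < r)
    (h : Summable fun i => ‖c i‖ * Real.exp (‖a i‖ * r)) {ω : ℂ}
    (hω : ω ∈ Metric.ball (0 : ℂ) (r / 2)) :
    HasDerivAt (fun z => ∑' i, c i * Complex.exp (a i * z))
      (∑' i, (c i * a i) * Complex.exp (a i * ω)) ω := by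
  have key : ∀ (i : ι) (z : ℂ), z ∈ Metric.ball (0:ℂ) (r/2) → ‖(c i * a i) * Complex.exp (a i * z)‖
      ≤ (‖c i‖ * ‖a i‖) * Real.exp (‖a i‖ * (r / 2)) := by
    intro i z hz
    rw [norm_mul, norm_mul]
    apply mul_le_mul_of_nonneg_left _ (by positivity)
    calc ‖Complex.exp (a i * z)‖ ≤ Real.exp ‖a i * z‖ := norm_cexp_le _
      _ ≤ Real.exp (‖a i‖ * (r / 2)) := by
          rw [Real.exp_le_exp, norm_mul]
          apply mul_le_mul_of_nonneg_left _ (norm_nonneg _)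
          rw [Metric.mem_ball, dist_zero_right] at hz
          exact hz.le
  exact hasDerivAt_tsum_of_isPreconnected (expsum_summable_aux a c hr h)
    Metric.isOpen_ball (convex_ball _ _).isPreconnected
    (fun i z _ => by
      simpa [mul_comm, mul_assoc, mul_left_comm] using
        (((hasDerivAt_id z).const_mul (a i)).cexp.const_mul (c i)))
    key (Metric.mem_ball_self (by positivity))
    (by
      refine Summable.of_norm_bounded h (fun i => ?_)
      simp only [mul_zero, Complex.exp_zero, mul_one, norm_mul]
      have : (1:ℝ) ≤ Real.exp (‖a i‖ * r) := Real.one_le_exp (by positivity)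
      nlinarith [norm_nonneg (c i)])
    hω

lemma expsum_analyticAt (a : ι → ℂ) (c : ι → ℂ) {r : ℝ} (hr : 0 < r)
    (h : Summable fun i => ‖c i‖ * Real.exp (‖a i‖ * r)) :
    AnalyticAt ℂ (fun z => ∑' i, c i * Complex.exp (a i * z)) 0 := by
  refine DifferentiableOn.analyticAt (s := Metric.ball 0 (r/2)) ?_
    (Metric.ball_mem_nhds _ (by positivity))
  intro z hz
  exact ((expsum_hasDerivAt a c hr h hz).differentiableAt).differentiableWithinAt

lemma expsum_iteratedDeriv (a : ι → ℂ) (t : ℕ) :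
    ∀ (r : ℝ) (c : ι → ℂ), 0 < r → (Summable fun i => ‖c i‖ * Real.exp (‖a i‖ * r)) →
    iteratedDeriv t (fun z => ∑' i, c i * Complex.exp (a i * z)) 0 = ∑' i, c i * a i ^ t := by
  induction t with
  | zero => intro r c hr h; simp
  | succ t ih =>
    intro r c hr h
    rw [iteratedDeriv_succ']
    have hev : deriv (fun z => ∑' i, c i * Complex.exp (a i * z))
        =ᶠ[nhds (0:ℂ)] (fun z => ∑' i, (c i * a i) * Complex.exp (a i * z)) := by
      filter_upwards [Metric.ball_mem_nhds (0:ℂ) (by positivity : (0:ℝ) < r/2)] with z hz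
      exact (expsum_hasDerivAt a c hr h hz).deriv
    rw [Filter.EventuallyEq.iteratedDeriv_eq t hev]
    have hsum' : Summable fun i => ‖c i * a i‖ * Real.exp (‖a i‖ * (r/2)) := by
      simpa [norm_mul] using expsum_summable_aux a c hr h
    rw [ih (r/2) (fun i => c i * a i) (by positivity) hsum']
    exact tsum_congr fun i => by ring

end expsum

def expo (n k : ℕ) : ℕ := 4*n^2 + 8*n + (8*n+4)*k

def idx : ℤ → ℕ := fun n => n.toNat + (-(n+1)).toNat

@[simp] lemma idx_ofNat (n : ℕ) : idx (n : ℤ) = n := by simp [idx]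

@[simp] lemma idx_neg (m : ℕ) : idx (-((m:ℤ)+1)) = m := by simp [idx]

def sgnz : ℤ → ℤ := fun n => if 0 ≤ n then 1 else -1

@[simp] lemma sgnz_ofNat (n : ℕ) : sgnz (n : ℤ) = 1 := by simp [sgnz]

@[simp] lemma sgnz_neg (m : ℕ) : sgnz (-((m:ℤ)+1)) = -1 := by
  simp only [sgnz, if_neg (by omega : ¬ (0:ℤ) ≤ -((m:ℤ)+1))]

def af : ℤ × ℕ → ℂ := fun p => (2 * (π:ℂ) * I) * ((sgnz p.1 : ℂ) * (2 * (p.2:ℂ) + 1))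

def cf (τ : ℂ) : ℤ × ℕ → ℂ := fun p => (-1)^(idx p.1) * nome τ ^ (expo (idx p.1) p.2)

lemma norm_af (p : ℤ × ℕ) : ‖af p‖ = 2 * π * (2 * (p.2:ℝ) + 1) := by
  have h2 : ‖(2*(π:ℂ)*I)‖ = 2*π := by
    simp [map_mul,
      abs_of_pos Real.pi_pos]
  have hsecond : ‖(2 * (p.2:ℂ) + 1)‖ = 2 * (p.2:ℝ) + 1 := by
    have : (2 * (p.2:ℂ) + 1) = (((2 * (p.2:ℝ) + 1) : ℝ) : ℂ) := by push_cast; ring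
    rw [this, Complex.norm_real, Real.norm_eq_abs, abs_of_pos (by positivity)]
  have h3 : ‖((sgnz p.1 : ℂ) * (2 * (p.2:ℂ) + 1))‖ = 2 * (p.2:ℝ) + 1 := by
    rcases (by unfold sgnz; split <;> simp : sgnz p.1 = 1 ∨ sgnz p.1 = -1) with h | h <;>
      rw [h, norm_mul, hsecond] <;> push_cast <;> simp
  rw [af, norm_mul, h2, h3]

lemma norm_cf (τ : ℂ) (p : ℤ × ℕ) : ‖cf τ p‖ = ‖nome τ‖ ^ (expo (idx p.1) p.2) := by
  rw [cf, norm_mul, norm_pow, norm_neg, norm_one, one_pow, one_mul, norm_pow]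

lemma expo_ge (n k : ℕ) : 4*n + 4*k ≤ expo n k := by
  unfold expo; nlinarith [sq_nonneg n]

/-- master summability: if `φ k (ρ^4)^k` is summable (φ ≥ 0) then so is
`ρ^(expo (idx n) k) * φ k` over `ℤ × ℕ`. -/
lemma summable_master {τ : ℂ} (hτ : 0 < τ.im) (φ : ℕ → ℝ) (hφ0 : ∀ k, 0 ≤ φ k)
    (hφ : Summable fun k => φ k * (‖nome τ‖^4)^k) :
    Summable fun p : ℤ × ℕ => ‖nome τ‖ ^ (expo (idx p.1) p.2) * φ p.2 := by
  set ρ : ℝ := ‖nome τ‖ with hρdef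
  have hρ0 : 0 < ρ := norm_pos_iff.mpr (nome_ne_zero τ)
  have hρ1 : ρ < 1 := norm_nome_lt_one hτ
  have hg : Summable fun n : ℤ => (ρ^4)^(idx n) := by
    have hx1 : ρ^4 < 1 := pow_lt_one₀ hρ0.le hρ1 (by norm_num)
    have hx0 : (0:ℝ) < ρ^4 := by positivity
    apply Summable.of_nat_of_neg
    · apply Summable.congr (summable_geometric_of_lt_one hx0.le hx1)
      intro n; rw [idx_ofNat]
    · refine Summable.of_nonneg_of_le (fun n => by positivity) (fun n => ?_)
        ((summable_geometric_of_lt_one hx0.le hx1).mul_left ((ρ^4)⁻¹))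
    
      have hidx : n ≤ idx (-(n:ℤ)) + 1 := by simp [idx]; omega
      have key : (ρ^4)^(idx (-(n:ℤ)) + 1) ≤ (ρ^4)^n :=
        pow_le_pow_of_le_one hx0.le hx1.le hidx
      calc (ρ^4)^(idx (-(n:ℤ))) = (ρ^4)⁻¹ * (ρ^4)^(idx (-(n:ℤ)) + 1) := by
            rw [pow_succ ((ρ:ℝ)^4) (idx (-(n:ℤ))), mul_comm ((ρ^4) ^ idx (-(n:ℤ))) (ρ^4),
              ← mul_assoc, inv_mul_cancel₀ (ne_of_gt hx0), one_mul]
        _ ≤ (ρ^4)⁻¹ * (ρ^4)^n := by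
            apply mul_le_mul_of_nonneg_left key; positivity
  have hprod := hg.mul_of_nonneg hφ (fun n => by positivity)
    (fun k => mul_nonneg (hφ0 k) (by positivity))
  refine Summable.of_nonneg_of_le (fun p => mul_nonneg (by positivity) (hφ0 _)) (fun p => ?_) hprod
  have h1 : ρ ^ (expo (idx p.1) p.2) ≤ (ρ^4)^(idx p.1) * (ρ^4)^(p.2) := by
    rw [← pow_mul, ← pow_mul, ← pow_add]
    exact pow_le_pow_of_le_one hρ0.le hρ1.le (by simpa [mul_comm] using expo_ge (idx p.1) p.2)
  calc ρ ^ (expo (idx p.1) p.2) * φ p.2 ≤ ((ρ^4)^(idx p.1) * (ρ^4)^(p.2)) * φ p.2 :=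
        mul_le_mul_of_nonneg_right h1 (hφ0 _)
    _ = (ρ^4)^(idx p.1) * (φ p.2 * (ρ^4)^(p.2)) := by ring

lemma summable_norm_pow {τ : ℂ} (hτ : 0 < τ.im) {g : ℕ → ℕ} (hg : ∀ n, n ≤ g n) :
    Summable fun n => ‖nome τ‖ ^ g n := by
  have hρ0 : 0 < ‖nome τ‖ := norm_pos_iff.mpr (nome_ne_zero τ)
  have hρ1 : ‖nome τ‖ < 1 := norm_nome_lt_one hτ
  refine Summable.of_nonneg_of_le (fun n => by positivity) (fun n => ?_)
    (summable_geometric_of_lt_one hρ0.le hρ1)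
  exact pow_le_pow_of_le_one hρ0.le hρ1.le (hg n)

lemma summable_theta_tail {τ : ℂ} (hτ : 0 < τ.im) :
    Summable fun n : ℕ => (-1:ℂ)^(n+1) * nome τ ^ (4*(n+1)^2) := by
  refine Summable.of_norm_bounded (summable_norm_pow hτ (g := fun n => 4*(n+1)^2)
    (fun n => by nlinarith)) (fun n => ?_)
  rw [norm_mul, norm_pow, norm_neg, norm_one, one_pow, one_mul, norm_pow]

lemma neg_one_zpow_natCast (n : ℕ) : ((-1:ℂ)) ^ ((n:ℤ)) = (-1:ℂ)^n := zpow_natCast _ _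

lemma jtheta_val {τ : ℂ} (hτ : 0 < τ.im) :
    jtheta (4*τ) (8*τ) = -(nome τ)⁻¹ * Theta4 τ := by
  have hconv : ∀ n : ℤ, (-1 : ℂ) ^ n * Complex.exp (2 * (π : ℂ) * I * (4*τ) * ((n : ℂ) + 1 / 2)) *
      Complex.exp ((π : ℂ) * I * (8*τ) * ((n : ℂ) + 1 / 2) ^ 2)
      = (-1:ℂ)^n * Complex.exp (2*(π:ℂ)*I*τ*(4*(n:ℂ)^2+8*(n:ℂ)+3)) := by
    intro n
    rw [mul_assoc, ← Complex.exp_add]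
    congr 2
    ring
  rw [jtheta, tsum_congr hconv]
  have hre := (Equiv.subRight (1:ℤ)).tsum_eq
    (fun n : ℤ => (-1:ℂ)^n * Complex.exp (2*(π:ℂ)*I*τ*(4*(n:ℂ)^2+8*(n:ℂ)+3)))
  rw [← hre]
  have hstep : ∀ m : ℤ, (-1:ℂ)^(Equiv.subRight (1:ℤ) m) *
      Complex.exp (2*(π:ℂ)*I*τ*(4*((Equiv.subRight (1:ℤ) m : ℤ):ℂ)^2+8*((Equiv.subRight (1:ℤ) m : ℤ):ℂ)+3))
      = (-Complex.exp (2*(π:ℂ)*I*τ*(-1))) * ((-1:ℂ)^m * Complex.exp (2*(π:ℂ)*I*τ*(4*(m:ℂ)^2))) := by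
    intro m
    have h1 : ((Equiv.subRight (1:ℤ) m : ℤ):ℂ) = (m:ℂ) - 1 := by
      simp [Equiv.subRight]
    have h2 : (-1:ℂ)^(Equiv.subRight (1:ℤ) m) = -(-1:ℂ)^m := by
      show (-1:ℂ)^(m - 1) = -(-1:ℂ)^m
      rw [zpow_sub_one₀ (by norm_num : (-1:ℂ) ≠ 0)]
      norm_num
    rw [h1, h2]
    have h4 : Complex.exp (2*(π:ℂ)*I*τ*(4*((m:ℂ)-1)^2+8*((m:ℂ)-1)+3))
        = Complex.exp (2*(π:ℂ)*I*τ*(-1)) * Complex.exp (2*(π:ℂ)*I*τ*(4*(m:ℂ)^2)) := by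
      rw [← Complex.exp_add]
      congr 1
      ring
    rw [h4]
    ring
  rw [tsum_congr hstep, tsum_mul_left]
  set h : ℤ → ℂ := fun m => (-1:ℂ)^m * Complex.exp (2*(π:ℂ)*I*τ*(4*(m:ℂ)^2)) with hh
  have heq1 : ∀ n : ℕ, h ((n:ℤ)+1) = (-1:ℂ)^(n+1) * nome τ ^ (4*(n+1)^2) := by
    intro n
    simp only [hh]
    have e1 : ((-1:ℂ))^(((n:ℤ))+1) = (-1:ℂ)^(n+1) := by
      have : ((n:ℤ)+1) = ((n+1:ℕ):ℤ) := by push_cast; ring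
      rw [this, zpow_natCast]
    have e2 : Complex.exp (2*(π:ℂ)*I*τ*(4*(((n:ℤ)+1:ℤ):ℂ)^2)) = nome τ ^ (4*(n+1)^2) := by
      rw [nome_pow_nat]
      congr 1
      push_cast; ring
    rw [e1, e2]
  have heq2 : ∀ n : ℕ, h (-((n:ℤ)+1)) = (-1:ℂ)^(n+1) * nome τ ^ (4*(n+1)^2) := by
    intro n
    simp only [hh]
    have e1 : ((-1:ℂ))^(-((n:ℤ)+1)) = (-1:ℂ)^(n+1) := by
      rw [zpow_neg]
      have : ((n:ℤ)+1) = ((n+1:ℕ):ℤ) := by push_cast; ring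
      rw [this, zpow_natCast, ← inv_pow, inv_neg, inv_one]
    have e2 : Complex.exp (2*(π:ℂ)*I*τ*(4*((-((n:ℤ)+1):ℤ):ℂ)^2)) = nome τ ^ (4*(n+1)^2) := by
      rw [nome_pow_nat]
      congr 1
      push_cast; ring
    rw [e1, e2]
  have hsum1 : Summable (fun n : ℕ => h ((n:ℤ)+1)) :=
    (summable_theta_tail hτ).congr (fun n => (heq1 n).symm)
  have hsum2 : Summable (fun n : ℕ => h (-((n:ℤ)+1))) :=
    (summable_theta_tail hτ).congr (fun n => (heq2 n).symm)
  rw [tsum_of_add_one_of_neg_add_one hsum1 hsum2]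
  have h0 : h 0 = 1 := by simp [hh]
  rw [tsum_congr heq1, tsum_congr heq2, h0]
  have hq : Complex.exp (2*(π:ℂ)*I*τ*(-1)) = (nome τ)⁻¹ := by
    rw [nome, ← Complex.exp_neg]
    congr 1
    ring
  rw [hq, Theta4]
  ring

set_option maxHeartbeats 1000000 in
lemma tsum_int_prod_split {f : ℤ × ℕ → ℂ} (hf : Summable f) :
    ∑' p : ℤ × ℕ, f p
      = (∑' p : ℕ × ℕ, f ((p.1:ℤ), p.2)) + ∑' p : ℕ × ℕ, f (-((p.1:ℤ)+1), p.2) := by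
  have hinj1 : Function.Injective (fun p : ℕ × ℕ => (((p.1:ℤ), p.2) : ℤ × ℕ)) := by
    intro p q hpq
    simp only [Prod.ext_iff] at hpq ⊢
    exact ⟨by exact_mod_cast hpq.1, hpq.2⟩
  have hinj2 : Function.Injective (fun p : ℕ × ℕ => ((-((p.1:ℤ)+1), p.2) : ℤ × ℕ)) := by
    intro p q hpq
    simp only [Prod.ext_iff] at hpq ⊢
    constructor
    · have := hpq.1; omega
    · exact hpq.2
  have h1 : Summable fun p : ℕ × ℕ => f ((p.1:ℤ), p.2) := hf.comp_injective hinj1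
  have h2 : Summable fun p : ℕ × ℕ => f (-((p.1:ℤ)+1), p.2) := hf.comp_injective hinj2
  have hs1 : Summable fun n : ℕ => ∑' k : ℕ, f ((n:ℤ), k) :=
    HasSum.summable (h1.hasSum.prod_fiberwise (fun b => (h1.prod_factor b).hasSum))
  have hs2 : Summable fun n : ℕ => ∑' k : ℕ, f (-((n:ℤ)+1), k) :=
    HasSum.summable (h2.hasSum.prod_fiberwise (fun b => (h2.prod_factor b).hasSum))
  rw [Summable.tsum_prod' hf hf.prod_factor, tsum_of_nat_of_neg_add_one hs1 hs2,
    Summable.tsum_prod' h1 h1.prod_factor, Summable.tsum_prod' h2 h2.prod_factor]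

lemma geom_exp (s c1 c2 : ℂ) (h : ‖Complex.exp c2‖ < 1) :
    s * Complex.exp c1 / (1 - Complex.exp c2)
      = ∑' k : ℕ, s * Complex.exp (c1 + (k:ℂ) * c2) := by
  have hterm : ∀ k : ℕ, s * Complex.exp (c1 + (k:ℂ) * c2)
      = (s * Complex.exp c1) * (Complex.exp c2)^k := by
    intro k
    rw [Complex.exp_add, ← Complex.exp_nat_mul]
    ring
  rw [tsum_congr hterm, tsum_mul_left, tsum_geometric_of_norm_lt_one h, div_eq_mul_inv]

lemma geom_exp_neg (s c1 c2 : ℂ) (h : ‖Complex.exp c2‖ < 1) :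
    s * Complex.exp c1 / (1 - Complex.exp (-c2))
      = ∑' k : ℕ, (-s) * Complex.exp (c1 + ((k:ℂ)+1) * c2) := by
  have hden : 1 - Complex.exp (-c2) = -Complex.exp (-c2) * (1 - Complex.exp c2) := by
    rw [neg_mul, mul_sub, mul_one, ← Complex.exp_add]
    simp
  have hne : (1 : ℂ) - Complex.exp c2 ≠ 0 := by
    intro hc
    rw [sub_eq_zero] at hc
    rw [← hc] at h
    simp at h
  have hterm : ∀ k : ℕ, (-s) * Complex.exp (c1 + ((k:ℂ)+1) * c2)
      = ((-s) * (Complex.exp c1 * Complex.exp c2)) * (Complex.exp c2)^k := by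
    intro k
    have hsplit : c1 + ((k:ℂ)+1) * c2 = (c1 + c2) + (k:ℂ)*c2 := by ring
    rw [hsplit, Complex.exp_add, Complex.exp_add, ← Complex.exp_nat_mul]
    ring
  rw [tsum_congr hterm, tsum_mul_left, tsum_geometric_of_norm_lt_one h, hden]
  rw [div_eq_mul_inv, mul_inv, inv_neg, ← Complex.exp_neg, neg_neg]
  ring

def Kc (τ : ℂ) : ℂ := -(nome τ^3) / Theta4 τ

def Dfun (τ ω : ℂ) (p : ℤ × ℕ) : ℂ := cf τ p * Complex.exp ((af p - 2*(π:ℂ)*I) * ω)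

lemma summable_poly_geom (t : ℕ) {x : ℝ} (h0 : 0 < x) (h1 : x < 1) :
    Summable fun k : ℕ => ((k:ℝ)+1)^t * x^k := by
  have hb : Summable fun k : ℕ => (k:ℝ)^t * x^k :=
    summable_pow_mul_geometric_of_norm_lt_one t (by rwa [Real.norm_eq_abs, abs_of_pos h0])
  have h2 : Summable fun k : ℕ => ((k+1:ℕ):ℝ)^t * x^(k+1) := (summable_nat_add_iff 1).mpr hb
  refine Summable.congr (h2.mul_left x⁻¹) (fun k => ?_)
  push_cast
  rw [pow_succ]
  field_simp

lemma rho_pow_exp {τ : ℂ} (m : ℕ) : (‖nome τ‖)^m = Real.exp (-(2*π*τ.im) * m) := by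
  rw [norm_nome, ← Real.exp_nat_mul]
  ring_nf

lemma summable_master1 {τ : ℂ} (hτ : 0 < τ.im) :
    Summable fun p : ℤ × ℕ =>
      ‖nome τ‖ ^ (expo (idx p.1) p.2) * Real.exp (2*π*(2*(p.2:ℝ)+2) * τ.im) := by
  have hφ : Summable fun k : ℕ => Real.exp (2*π*(2*(k:ℝ)+2) * τ.im) * (‖nome τ‖^4)^k := by
    have hkey : ∀ k : ℕ, Real.exp (2*π*(2*(k:ℝ)+2) * τ.im) * (‖nome τ‖^4)^k
        = Real.exp (4*π*τ.im) * (Real.exp (-(4*π*τ.im)))^k := by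
      intro k
      rw [← pow_mul, rho_pow_exp, ← Real.exp_nat_mul, ← Real.exp_add, ← Real.exp_add]
      congr 1
      push_cast
      ring
    apply Summable.congr _ (fun k => (hkey k).symm)
    apply Summable.mul_left
    exact summable_geometric_of_lt_one (Real.exp_pos _).le
      (Real.exp_lt_one_iff.mpr (by nlinarith [Real.pi_pos]))
  exact summable_master hτ (fun k => Real.exp (2*π*(2*(k:ℝ)+2) * τ.im))
    (fun k => (Real.exp_pos _).le) hφ

lemma summable_master2 {τ : ℂ} (hτ : 0 < τ.im) (t : ℕ) :
    Summable fun p : ℤ × ℕ =>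
      ‖nome τ‖ ^ (expo (idx p.1) p.2) * (2*π*(2*(p.2:ℝ)+1))^t := by
  have hρ0 : 0 < ‖nome τ‖ := norm_pos_iff.mpr (nome_ne_zero τ)
  have hρ1 : ‖nome τ‖ < 1 := norm_nome_lt_one hτ
  have hx0 : (0:ℝ) < ‖nome τ‖^4 := by positivity
  have hx1 : ‖nome τ‖^4 < 1 := pow_lt_one₀ hρ0.le hρ1 (by norm_num)
  have hφ : Summable fun k : ℕ => (2*π*(2*(k:ℝ)+1))^t * (‖nome τ‖^4)^k := by
    refine Summable.of_nonneg_of_le (fun k => by positivity) (fun k => ?_)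
      (((summable_poly_geom t hx0 hx1).mul_left ((4*π)^t)))
    have h1 : (2*π*(2*(k:ℝ)+1))^t ≤ (4*π)^t * ((k:ℝ)+1)^t := by
      rw [← mul_pow]
      apply pow_le_pow_left₀ (by positivity)
      nlinarith [Real.pi_pos]
    calc (2*π*(2*(k:ℝ)+1))^t * (‖nome τ‖^4)^k
        ≤ ((4*π)^t * ((k:ℝ)+1)^t) * (‖nome τ‖^4)^k :=
          mul_le_mul_of_nonneg_right h1 (by positivity)
      _ = (4*π)^t * (((k:ℝ)+1)^t * (‖nome τ‖^4)^k) := by ring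
  exact summable_master hτ (fun k => (2*π*(2*(k:ℝ)+1))^t) (fun k => by positivity) hφ

lemma norm_two_pi_I : ‖(2*(π:ℂ)*I)‖ = 2*π := by
  simp [map_mul,
    abs_of_pos Real.pi_pos]

lemma norm_cexp_nome (τ : ℂ) (m : ℕ) : ‖Complex.exp (2*(π:ℂ)*I*τ*(m:ℂ))‖ = ‖nome τ‖^m := by
  rw [← nome_pow_nat, norm_pow]

lemma rho_inv {τ : ℂ} : Real.exp (2*π*τ.im) = ‖nome τ‖⁻¹ := by
  rw [norm_nome, Real.exp_neg, inv_inv]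

lemma norm_cexp_omega {τ ω : ℂ} (hτ : 0 < τ.im) (hω : ‖ω‖ < τ.im/2) :
    ‖Complex.exp (2*(π:ℂ)*I*(2*ω))‖ < ‖nome τ‖⁻¹ := by
  rw [← rho_inv]
  calc ‖Complex.exp (2*(π:ℂ)*I*(2*ω))‖ ≤ Real.exp ‖2*(π:ℂ)*I*(2*ω)‖ := norm_cexp_le _
    _ < Real.exp (2*π*τ.im) := by
        rw [Real.exp_lt_exp, norm_mul, norm_two_pi_I, norm_mul]
        have h2 : ‖(2:ℂ)‖ = 2 := by norm_num
        rw [h2]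
        nlinarith [Real.pi_pos, norm_nonneg ω]

lemma norm_cexp_omega_neg {τ ω : ℂ} (hτ : 0 < τ.im) (hω : ‖ω‖ < τ.im/2) :
    ‖Complex.exp (-(2*(π:ℂ)*I*(2*ω)))‖ < ‖nome τ‖⁻¹ := by
  have := norm_cexp_omega (τ := τ) (ω := -ω) hτ (by rwa [norm_neg])
  have heq : (2*(π:ℂ)*I*(2*(-ω))) = -(2*(π:ℂ)*I*(2*ω)) := by ring
  rwa [heq] at this

lemma den_norm_lt {τ : ℂ} (hτ : 0 < τ.im) (m : ℕ) {w : ℂ} (hw : ‖w‖ < ‖nome τ‖⁻¹) (hm : 1 ≤ m) :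
    ‖Complex.exp (2*(π:ℂ)*I*τ*(m:ℂ)) * w‖ < 1 := by
  have hρ0 : 0 < ‖nome τ‖ := norm_pos_iff.mpr (nome_ne_zero τ)
  have hρ1 : ‖nome τ‖ < 1 := norm_nome_lt_one hτ
  rw [norm_mul, norm_cexp_nome]
  calc ‖nome τ‖^m * ‖w‖ < ‖nome τ‖^m * ‖nome τ‖⁻¹ := by
        apply mul_lt_mul_of_pos_left hw (by positivity)
    _ = ‖nome τ‖^(m-1) := by
        have hsplit : ‖nome τ‖^m = ‖nome τ‖^(m-1) * ‖nome τ‖ := by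
          rw [← pow_succ]
          congr 1
          omega
        rw [hsplit, mul_assoc, mul_inv_cancel₀ (by positivity), mul_one]
    _ ≤ 1 := pow_le_one₀ hρ0.le hρ1.le

lemma summable_Dfun {τ ω : ℂ} (hτ : 0 < τ.im) (hω : ‖ω‖ < τ.im/2) :
    Summable (Dfun τ ω) := by
  apply Summable.of_norm_bounded (summable_master1 hτ)
  intro p
  rw [Dfun, norm_mul, norm_cf]
  apply mul_le_mul_of_nonneg_left _ (by positivity)
  calc ‖Complex.exp ((af p - 2*(π:ℂ)*I) * ω)‖ ≤ Real.exp ‖(af p - 2*(π:ℂ)*I) * ω‖ :=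
        norm_cexp_le _
    _ ≤ Real.exp (2*π*(2*(p.2:ℝ)+2) * τ.im) := by
        rw [Real.exp_le_exp, norm_mul]
        have h1 : ‖af p - 2*(π:ℂ)*I‖ ≤ 2*π*(2*(p.2:ℝ)+2) := by
          calc ‖af p - 2*(π:ℂ)*I‖ ≤ ‖af p‖ + ‖(2*(π:ℂ)*I)‖ := norm_sub_le _ _
            _ = 2*π*(2*(p.2:ℝ)+1) + 2*π := by rw [norm_af, norm_two_pi_I]
            _ = 2*π*(2*(p.2:ℝ)+2) := by ring
        calc ‖af p - 2*(π:ℂ)*I‖ * ‖ω‖ ≤ (2*π*(2*(p.2:ℝ)+2)) * ‖ω‖ :=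
              mul_le_mul_of_nonneg_right h1 (norm_nonneg _)
          _ ≤ (2*π*(2*(p.2:ℝ)+2)) * τ.im := by
              apply mul_le_mul_of_nonneg_left _ (by positivity)
              nlinarith [norm_nonneg ω]
          _ = 2*π*(2*(p.2:ℝ)+2) * τ.im := rfl

lemma mu_expand {τ : ℂ} (hτ : 0 < τ.im) {ω : ℂ} (hω : ‖ω‖ < τ.im/2) :
    mu (4*τ+2*ω) (4*τ) (8*τ)
      = ∑' p : ℤ × ℕ, (Kc τ * cf τ p) * Complex.exp (af p * ω) := by
  have hq8 : nome (8*τ) = Complex.exp (2*(π:ℂ)*I*τ*8) := by rw [nome]; ring_nf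
  have hpos : ∀ n : ℕ,
      (-Complex.exp (2*(π:ℂ)*I*(4*τ)))^((n:ℤ)) * nome (8*τ) ^ ((((n:ℤ))*(((n:ℤ))+1))/2) /
        (1 - Complex.exp (2*(π:ℂ)*I*(4*τ+2*ω)) * nome (8*τ)^((n:ℤ)))
      = ∑' k : ℕ, Dfun τ ω ((n:ℤ), k) := by
    intro n
    obtain ⟨c, hc⟩ : ∃ c, n*(n+1) = c + c := Nat.even_mul_succ_self n
    have hZ : ((n:ℤ))*(((n:ℤ))+1) = ((c:ℕ):ℤ)+((c:ℕ):ℤ) := by exact_mod_cast hc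
    have hN : ((((n:ℤ)))*((((n:ℤ)))+1))/2 = ((c:ℕ):ℤ) := by rw [hZ]; omega
    have hcC : 2*((c:ℂ)) = (n:ℂ)^2+(n:ℂ) := by
      have h := congrArg (fun z : ℤ => (z:ℂ)) hZ
      push_cast at h
      linear_combination -h
    have hnum : (-Complex.exp (2*(π:ℂ)*I*(4*τ)))^((n:ℤ)) *
        nome (8*τ) ^ ((((n:ℤ))*(((n:ℤ))+1))/2)
        = (-1:ℂ)^n * Complex.exp (2*(π:ℂ)*I*τ*((4*n^2+8*n : ℕ):ℂ)) := by
      rw [hN, zpow_natCast, zpow_natCast, neg_pow, hq8, ← Complex.exp_nat_mul,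
        ← Complex.exp_nat_mul, mul_assoc, ← Complex.exp_add]
      have hXY : ((n:ℕ):ℂ) * (2*(π:ℂ)*I*(4*τ)) + ((c:ℕ):ℂ)*(2*(π:ℂ)*I*τ*8)
          = 2*(π:ℂ)*I*τ*((4*n^2+8*n : ℕ):ℂ) := by
        push_cast
        linear_combination (8*(π:ℂ)*I*τ) * hcC
      rw [hXY]
    have hden : Complex.exp (2*(π:ℂ)*I*(4*τ+2*ω)) * nome (8*τ)^((n:ℤ))
        = Complex.exp (2*(π:ℂ)*I*τ*((8*n+4 : ℕ):ℂ) + 2*(π:ℂ)*I*(2*ω)) := by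
      rw [zpow_natCast, hq8, ← Complex.exp_nat_mul, ← Complex.exp_add]
      congr 1
      push_cast
      ring
    have hlt : ‖Complex.exp (2*(π:ℂ)*I*τ*((8*n+4 : ℕ):ℂ) + 2*(π:ℂ)*I*(2*ω))‖ < 1 := by
      rw [Complex.exp_add]
      exact den_norm_lt hτ (8*n+4) (norm_cexp_omega hτ hω) (by omega)
    rw [hnum, hden, geom_exp ((-1:ℂ)^n) _ _ hlt]
    refine tsum_congr fun k => ?_
    rw [Dfun, cf]
    simp only [idx_ofNat, af, sgnz_ofNat]
    rw [nome_pow_nat]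
    conv_rhs => rw [mul_assoc, ← Complex.exp_add]
    congr 1
    simp only [expo]
    push_cast
    ring
  have hneg : ∀ m : ℕ,
      (-Complex.exp (2*(π:ℂ)*I*(4*τ)))^((-((m:ℤ)+1))) *
        nome (8*τ) ^ (((-((m:ℤ)+1))*((-((m:ℤ)+1))+1))/2) /
        (1 - Complex.exp (2*(π:ℂ)*I*(4*τ+2*ω)) * nome (8*τ)^((-((m:ℤ)+1))))
      = ∑' k : ℕ, Dfun τ ω (-((m:ℤ)+1), k) := by
    intro m
    obtain ⟨c, hc⟩ : ∃ c, m*(m+1) = c + c := Nat.even_mul_succ_self m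
    have hZc : ((m:ℤ))*(((m:ℤ))+1) = ((c:ℕ):ℤ)+((c:ℕ):ℤ) := by exact_mod_cast hc
    have hZ2 : (-((m:ℤ)+1)) * ((-((m:ℤ)+1))+1) = ((c:ℕ):ℤ)+((c:ℕ):ℤ) := by
      linear_combination hZc
    have hN : ((-((m:ℤ)+1))*((-((m:ℤ)+1))+1))/2 = ((c:ℕ):ℤ) := by rw [hZ2]; omega
    have hcC : 2*((c:ℂ)) = (m:ℂ)^2+(m:ℂ) := by
      have h := congrArg (fun z : ℤ => (z:ℂ)) hZc
      push_cast at h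
      linear_combination -h
    have hme : (-((m:ℤ)+1)) = -((m+1 : ℕ):ℤ) := by push_cast; ring
    have hinvpow : ∀ z : ℂ, (z)^(-((m:ℤ)+1)) = (z^(m+1))⁻¹ := by
      intro z
      rw [hme, zpow_neg, zpow_natCast]
    have hnum : (-Complex.exp (2*(π:ℂ)*I*(4*τ)))^((-((m:ℤ)+1))) *
        nome (8*τ) ^ (((-((m:ℤ)+1))*((-((m:ℤ)+1))+1))/2)
        = ((-1:ℂ)^(m+1)) * Complex.exp (-(((m+1:ℕ):ℂ) * (2*(π:ℂ)*I*(4*τ)))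
            + ((c:ℕ):ℂ)*(2*(π:ℂ)*I*τ*8)) := by
      rw [hN, hinvpow, zpow_natCast, neg_pow, mul_inv, hq8, ← Complex.exp_nat_mul,
        ← Complex.exp_nat_mul, ← Complex.exp_neg]
      have hsign : (((-1:ℂ))^(m+1))⁻¹ = (-1:ℂ)^(m+1) := by
        rw [← inv_pow, inv_neg, inv_one]
      rw [hsign]
      conv_lhs => rw [mul_assoc, ← Complex.exp_add]
    have hden : Complex.exp (2*(π:ℂ)*I*(4*τ+2*ω)) * nome (8*τ)^((-((m:ℤ)+1)))
        = Complex.exp (-(2*(π:ℂ)*I*τ*((8*m+4 : ℕ):ℂ) + -(2*(π:ℂ)*I*(2*ω)))) := by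
      rw [hinvpow, hq8, ← Complex.exp_nat_mul, ← Complex.exp_neg, ← Complex.exp_add]
      congr 1
      push_cast
      ring
    have hlt : ‖Complex.exp (2*(π:ℂ)*I*τ*((8*m+4 : ℕ):ℂ) + -(2*(π:ℂ)*I*(2*ω)))‖ < 1 := by
      rw [Complex.exp_add]
      exact den_norm_lt hτ (8*m+4) (norm_cexp_omega_neg hτ hω) (by omega)
    rw [hnum, hden, geom_exp_neg ((-1:ℂ)^(m+1)) _ _ hlt]
    refine tsum_congr fun k => ?_
    rw [Dfun, cf]
    simp only [idx_neg, af, sgnz_neg]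
    rw [nome_pow_nat]
    conv_rhs => rw [mul_assoc, ← Complex.exp_add]
    have hsgn : -((-1:ℂ)^(m+1)) = (-1:ℂ)^m := by rw [pow_succ]; ring
    rw [hsgn]
    congr 1
    · congr 1
      simp only [expo]
      push_cast
      linear_combination (8*(π:ℂ)*I*τ) * hcC
  have hterm : ∀ nn : ℤ,
      (-Complex.exp (2*(π:ℂ)*I*(4*τ)))^(nn) * nome (8*τ) ^ ((nn*(nn+1))/2) /
        (1 - Complex.exp (2*(π:ℂ)*I*(4*τ+2*ω)) * nome (8*τ)^(nn))
      = ∑' k : ℕ, Dfun τ ω (nn, k) := by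
    intro nn
    cases nn with
    | ofNat n => exact_mod_cast hpos n
    | negSucc m =>
        rw [Int.negSucc_eq]
        exact_mod_cast hneg m
  have hD : Summable (Dfun τ ω) := summable_Dfun hτ hω
  rw [mu, jtheta_val hτ, tsum_congr hterm,
    ← Summable.tsum_prod' hD hD.prod_factor, ← tsum_mul_left]
  refine tsum_congr fun p => ?_
  rw [Dfun, Kc]
  have h1 : Complex.exp ((π:ℂ)*I*(4*τ+2*ω)) = nome τ^2 * Complex.exp (2*(π:ℂ)*I*ω) := by
    rw [nome_pow_nat, ← Complex.exp_add]
    congr 1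
    push_cast
    ring
  have hinv : (-(nome τ)⁻¹ * Theta4 τ)⁻¹ = -(nome τ) * (Theta4 τ)⁻¹ := by
    rw [neg_mul, inv_neg, mul_inv, inv_inv, neg_mul]
  have hXY : Complex.exp (2*(π:ℂ)*I*ω) * Complex.exp ((af p - 2*(π:ℂ)*I) * ω)
      = Complex.exp (af p * ω) := by
    rw [← Complex.exp_add]
    congr 1
    ring
  rw [h1, div_eq_mul_inv, hinv, div_eq_mul_inv]
  linear_combination (-(nome τ^3) * (Theta4 τ)⁻¹ * cf τ p) * hXY

def gf (τ : ℂ) (t : ℕ) : ℕ × ℕ → ℂ :=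
  fun p => (-1:ℂ)^p.1 * nome τ^(expo p.1 p.2) * (2*(p.2:ℂ)+1)^t

lemma summable_cf_af {τ : ℂ} (hτ : 0 < τ.im) (t : ℕ) :
    Summable (fun p : ℤ × ℕ => cf τ p * af p ^ t) := by
  apply Summable.of_norm_bounded (summable_master2 hτ t)
  intro p
  rw [norm_mul, norm_cf, norm_pow, norm_af]

lemma summable_gf {τ : ℂ} (hτ : 0 < τ.im) (t : ℕ) : Summable (gf τ t) := by
  have h1 := (summable_master2 hτ t).comp_injective
    (i := fun p : ℕ × ℕ => (((p.1:ℤ), p.2) : ℤ × ℕ))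
    (fun p q hpq => by
      simp only [Prod.ext_iff] at hpq ⊢
      exact ⟨by exact_mod_cast hpq.1, hpq.2⟩)
  apply Summable.of_norm_bounded h1
  intro p
  simp only [Function.comp_apply, idx_ofNat, gf]
  rw [norm_mul, norm_mul, norm_pow, norm_neg, norm_one, one_pow, one_mul, norm_pow]
  apply mul_le_mul_of_nonneg_left _ (by positivity)
  rw [norm_pow]
  apply pow_le_pow_left₀ (norm_nonneg _)
  have hn : ‖2*(p.2:ℂ)+1‖ = 2*(p.2:ℝ)+1 := by
    have hcast : (2*(p.2:ℂ)+1) = (((2*(p.2:ℝ)+1) : ℝ) : ℂ) := by push_cast; ring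
    rw [hcast, Complex.norm_real, Real.norm_eq_abs, abs_of_pos (by positivity)]
  rw [hn]
  nlinarith [Real.pi_gt_three, Nat.cast_nonneg (α := ℝ) p.2]

lemma Fser_eq {τ : ℂ} (hτ : 0 < τ.im) (t : ℕ) :
    Fser t (nome τ) = -(nome τ^3) * ∑' p : ℕ × ℕ, gf τ t p := by
  have hG : Summable (fun r : ℕ × ℕ => gf τ t (r.2, r.1)) :=
    (summable_gf hτ t).comp_injective (fun p q hpq => by
      simp only [Prod.ext_iff] at hpq ⊢
      exact ⟨hpq.2, hpq.1⟩)
  have hterm : ∀ β j : ℕ, (-1 : ℂ) ^ (β + 1 + j + β) * (2 * (β : ℂ) + 1) ^ t *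
      nome τ ^ (4 * (β + 1 + j) ^ 2 - (2 * β + 1) ^ 2)
      = -(nome τ^3) * gf τ t (j, β) := by
    intro β j
    have hsign : (-1 : ℂ) ^ (β + 1 + j + β) = -(-1:ℂ)^j := by
      have he : β + 1 + j + β = 2*β + (j+1) := by omega
      rw [he, pow_add, pow_mul]
      norm_num [pow_succ]
    have hexp : 4 * (β + 1 + j) ^ 2 - (2 * β + 1) ^ 2 = 3 + expo j β := by
      apply Nat.sub_eq_of_eq_add
      simp only [expo]
      ring
    rw [hsign, hexp, pow_add, gf]
    ring
  rw [Fser]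
  calc ∑' (β : ℕ) (j : ℕ), (-1 : ℂ) ^ (β + 1 + j + β) * (2 * (β : ℂ) + 1) ^ t *
      nome τ ^ (4 * (β + 1 + j) ^ 2 - (2 * β + 1) ^ 2)
      = ∑' (β : ℕ) (j : ℕ), -(nome τ^3) * gf τ t (j, β) := by
        refine tsum_congr fun β => tsum_congr fun j => hterm β j
    _ = ∑' (β : ℕ), -(nome τ^3) * ∑' (j : ℕ), gf τ t (j, β) := by
        refine tsum_congr fun β => tsum_mul_left
    _ = -(nome τ^3) * ∑' (β : ℕ) (j : ℕ), gf τ t (j, β) := tsum_mul_left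
    _ = -(nome τ^3) * ∑' r : ℕ × ℕ, gf τ t (r.2, r.1) := by
        rw [← Summable.tsum_prod' hG hG.prod_factor]
    _ = -(nome τ^3) * ∑' p : ℕ × ℕ, gf τ t p := by
        congr 1
        exact (Equiv.prodComm ℕ ℕ).tsum_eq (fun p => gf τ t p) |>.symm ▸ rfl


/-- Theorem (paper Thm 7.1, first identity): for even `t ≥ 0` and `τ ∈ ℍ`,
`ℱ_t(q)/Θ₄(τ) = ½ D_ω^t μ(4τ+2ω,4τ;8τ)|_{ω=0}`, where the function is holomorphic
in `ω` near `0` and `D_ω = (2πi)⁻¹ d/dω`. -/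
theorem stmt0 (t : ℕ) (ht : Even t) (τ : ℂ) (hτ : 0 < τ.im) :
    AnalyticAt ℂ (fun ω : ℂ => mu (4 * τ + 2 * ω) (4 * τ) (8 * τ)) 0 ∧
    Fser t (nome τ) / Theta4 τ =
      (1 / 2) * ((1 / (2 * (π : ℂ) * I)) ^ t *
        iteratedDeriv t (fun ω : ℂ => mu (4 * τ + 2 * ω) (4 * τ) (8 * τ)) 0) := by
  have hρ0 : 0 < ‖nome τ‖ := norm_pos_iff.mpr (nome_ne_zero τ)
  -- summability hypothesis for the exponential-sum machinery, radius r = τ.im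
  have hsumEXP : Summable fun p : ℤ × ℕ =>
      ‖Kc τ * cf τ p‖ * Real.exp (‖af p‖ * τ.im) := by
    refine Summable.of_nonneg_of_le (fun p => by positivity) (fun p => ?_)
      ((summable_master1 hτ).mul_left ‖Kc τ‖)
    rw [norm_mul, norm_cf, mul_assoc]
    apply mul_le_mul_of_nonneg_left _ (norm_nonneg _)
    apply mul_le_mul_of_nonneg_left _ (by positivity)
    rw [Real.exp_le_exp, norm_af]
    nlinarith [Real.pi_pos, Nat.cast_nonneg (α := ℝ) p.2, hτ]
  -- the μ-function agrees with the exponential sum near 0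
  have hEq : (fun ω : ℂ => mu (4 * τ + 2 * ω) (4 * τ) (8 * τ))
      =ᶠ[nhds (0:ℂ)] (fun ω : ℂ => ∑' p : ℤ × ℕ, (Kc τ * cf τ p) * Complex.exp (af p * ω)) := by
    filter_upwards [Metric.ball_mem_nhds (0:ℂ) (by positivity : (0:ℝ) < τ.im/2)] with ω hω
    rw [Metric.mem_ball, dist_zero_right] at hω
    exact mu_expand hτ hω
  constructor
  · exact (expsum_analyticAt af _ hτ hsumEXP).congr hEq.symm
  · rw [Filter.EventuallyEq.iteratedDeriv_eq t hEq,
      expsum_iteratedDeriv af t τ.im _ hτ hsumEXP]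
    -- evaluate the sum
    have hsum := summable_cf_af hτ t
    have hterm : ∀ p : ℤ × ℕ, (Kc τ * cf τ p) * af p ^ t = Kc τ * (cf τ p * af p ^ t) := by
      intro p; ring
    rw [tsum_congr hterm, tsum_mul_left, tsum_int_prod_split hsum]
    have hposval : ∀ p : ℕ × ℕ, cf τ ((p.1:ℤ), p.2) * af ((p.1:ℤ), p.2) ^ t
        = (2*(π:ℂ)*I)^t * gf τ t p := by
      intro p
      rw [cf, af]
      simp only [idx_ofNat, sgnz_ofNat, gf]
      rw [mul_pow]
      push_cast
      ring
    have hnegval : ∀ p : ℕ × ℕ, cf τ (-((p.1:ℤ)+1), p.2) * af (-((p.1:ℤ)+1), p.2) ^ t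
        = (2*(π:ℂ)*I)^t * gf τ t p := by
      intro p
      rw [cf, af]
      simp only [idx_neg, sgnz_neg, gf]
      rw [mul_pow]
      have hneg1 : (((-1:ℤ):ℂ) * (2*(p.2:ℂ)+1))^t = (2*(p.2:ℂ)+1)^t := by
        push_cast
        rw [neg_one_mul, Even.neg_pow ht]
      rw [hneg1]
      ring
    rw [tsum_congr hposval, tsum_congr hnegval, tsum_mul_left, Fser_eq hτ t]
    have hcancel : (1 / (2 * (π : ℂ) * I)) ^ t * (2*(π:ℂ)*I)^t = 1 := by
      rw [one_div, ← mul_pow, inv_mul_cancel₀ (by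
        simp [Complex.ext_iff, Real.pi_ne_zero] : (2*(π:ℂ)*I) ≠ 0), one_pow]
    have hKc : Kc τ = -(nome τ^3) * (Theta4 τ)⁻¹ := by rw [Kc, div_eq_mul_inv]
    calc -(nome τ^3) * (∑' p : ℕ×ℕ, gf τ t p) / Theta4 τ
        = ((1/(2*(π:ℂ)*I))^t * (2*(π:ℂ)*I)^t) *
            (-(nome τ^3) * (Theta4 τ)⁻¹ * (∑' p : ℕ×ℕ, gf τ t p)) := by
          rw [hcancel, div_eq_mul_inv]
          ring
      _ = 1 / 2 * ((1/(2*(π:ℂ)*I))^t *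
            (Kc τ * ((2*(π:ℂ)*I)^t * (∑' p : ℕ×ℕ, gf τ t p)
              + (2*(π:ℂ)*I)^t * (∑' p : ℕ×ℕ, gf τ t p)))) := by
          rw [hKc]
          ring
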